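/- There exists ε > 0 such that the ruled strip f, restricted to Ω_ε := I × (−ε, ε), is injective (i.e. f gives an embedding of the strip for all sufficiently small ε). -/

import Mathlib

noncomputable section
open Real Set Filter Topology
open scoped ContDiff

local notation "⟪" x ", " y "⟫" => @inner ℝ _ _ x y

/-- Euclidean 3-space. -/
abbrev E3 := EuclideanSpace ℝ (Fin 3)

/-- The vector (cross) product of `ℝ³`. -/
def cross3 (u v : E3) : E3 :=
  (WithLp.equiv 2 (Fin 3 → ℝ)).symm
    ![u 1 * v 2 - u 2 * v 1, u 2 * v 0 - u 0 * v 2, u 0 * v 1 - u 1 * v 0]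

lemma cross3_inner_right (u v : E3) : ⟪cross3 u v, v⟫ = 0 := by
  simp [cross3, PiLp.inner_apply, Fin.sum_univ_three, WithLp.equiv_symm_apply]
  ring

lemma locInj {E F : Type*} [NormedAddCommGroup E] [NormedSpace ℝ E] [FiniteDimensional ℝ E]
    [NormedAddCommGroup F] [NormedSpace ℝ F]
    {f : E → F} {L : E →L[ℝ] F} {x₀ : E}
    (hf : HasStrictFDerivAt f L x₀) (hL : Function.Injective L) :
    ∃ U ∈ 𝓝 x₀, InjOn f U := by
  obtain ⟨K, hK0, hKa⟩ := (L : E →ₗ[ℝ] F).exists_antilipschitzWith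
    (by rw [LinearMap.ker_eq_bot]; exact hL)
  obtain ⟨c, hc0, hcK⟩ : ∃ c : NNReal, 0 < c ∧ (c : ℝ) < (K : ℝ)⁻¹ := by
    refine ⟨K⁻¹ / 2, ?_, ?_⟩
    · positivity
    · push_cast
      have : (0:ℝ) < (K:ℝ)⁻¹ := by positivity
      linarith
  obtain ⟨s, hs, happ⟩ := hf.approximates_deriv_on_nhds (Or.inr hc0)
  refine ⟨s, hs, fun x hx y hy hxy => ?_⟩
  have h1 : ‖f x - f y - L (x - y)‖ ≤ c * ‖x - y‖ := happ x hx y hy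
  rw [hxy, sub_self, zero_sub, norm_neg] at h1
  have h2 : ‖x - y‖ ≤ K * ‖L (x - y)‖ := by
    have := hKa.le_mul_dist x y
    simpa [dist_eq_norm, map_sub] using this
  have h3 : ‖x - y‖ ≤ K * (c * ‖x - y‖) := h2.trans (by gcongr)
  have hKpos : (0:ℝ) < (K:ℝ) := by exact_mod_cast hK0
  have h4 : (K : ℝ) * c < 1 := by
    have := mul_lt_mul_of_pos_left hcK hKpos
    rwa [mul_inv_cancel₀ (ne_of_gt hKpos)] at this
  by_contra hne
  have hpos : 0 < ‖x - y‖ := by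
    simpa [sub_eq_zero] using (norm_pos_iff.mpr (sub_ne_zero.mpr hne))
  nlinarith [h3, h4, hpos]

lemma contDiffAt_proj_comp {f : ℝ → E3} {t : ℝ} (hf : ContDiffAt ℝ ∞ f t) (i : Fin 3) :
    ContDiffAt ℝ ∞ (fun s => f s i) t :=
  (EuclideanSpace.proj (𝕜 := ℝ) i).contDiff.contDiffAt.comp t hf

lemma contDiffAt_cross3 {f g : ℝ → E3} {t : ℝ}
    (hf : ContDiffAt ℝ ∞ f t) (hg : ContDiffAt ℝ ∞ g t) :
    ContDiffAt ℝ ∞ (fun s => cross3 (f s) (g s)) t := by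
  have key : (fun s => cross3 (f s) (g s)) =
      (fun x : Fin 3 → ℝ => (WithLp.equiv 2 (Fin 3 → ℝ)).symm x) ∘
      (fun s => ![f s 1 * g s 2 - f s 2 * g s 1, f s 2 * g s 0 - f s 0 * g s 2,
        f s 0 * g s 1 - f s 1 * g s 0]) := rfl
  rw [key]
  have h1 : ContDiffAt ℝ ∞ (fun s => ![f s 1 * g s 2 - f s 2 * g s 1,
      f s 2 * g s 0 - f s 0 * g s 2, f s 0 * g s 1 - f s 1 * g s 0]) t := by
    apply contDiffAt_pi.mpr
    intro i
    fin_cases i <;> simp <;>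
      exact ((contDiffAt_proj_comp hf _).mul (contDiffAt_proj_comp hg _)).sub
        ((contDiffAt_proj_comp hf _).mul (contDiffAt_proj_comp hg _))
  exact ((EuclideanSpace.equiv (Fin 3) ℝ).symm.contDiff.contDiffAt).comp t h1

/-- for sufficiently small `ε > 0`, the ruled strip
`f(t,v) = c(t) + v ξ(t)` is injective on `Ω_ε = I × (-ε, ε)`. -/
theorem stmt5 (a b : ℝ) (hab : a < b)
    (c : ℝ → E3) (hc : ContDiff ℝ ∞ c) (hinj : InjOn c (Icc a b))
    (harc : ∀ t ∈ Icc a b, ‖deriv c t‖ = 1)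
    (κ : ℝ → ℝ) (hκ : ∀ t, κ t = ‖deriv (deriv c) t‖)
    (hκpos : ∀ t ∈ Icc a b, 0 < κ t)
    (e n bi : ℝ → E3) (τ : ℝ → ℝ)
    (he : ∀ t, e t = deriv c t)
    (hn : ∀ t, n t = (κ t)⁻¹ • deriv (deriv c) t)
    (hbi : ∀ t, bi t = cross3 (e t) (n t))
    (hτ : ∀ t, τ t = ⟪deriv n t, bi t⟫)
    (α β : ℝ → ℝ) (hα : ContDiff ℝ ∞ α) (hβ : ContDiff ℝ ∞ β)
    (hα1 : ∀ t ∈ Icc a b, 0 < |α t| ∧ |α t| < π / 2)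
    (hβ1 : ∀ t ∈ Icc a b, 0 < β t ∧ β t < π)
    (ξ : ℝ → E3)
    (hξ : ∀ t, ξ t = cos (β t) • e t +
      sin (β t) • (cos (α t) • n t + sin (α t) • bi t)) :
    ∃ ε > (0 : ℝ),
      InjOn (fun p : ℝ × ℝ => c p.1 + p.2 • ξ p.1) (Icc a b ×ˢ Ioo (-ε) ε) := by
  set F : ℝ × ℝ → E3 := fun p : ℝ × ℝ => c p.1 + p.2 • ξ p.1 with hF
  -- basic smoothness
  have hc' : ContDiff ℝ ∞ (deriv c) := (contDiff_infty_iff_deriv.mp hc).2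
  have hc'' : ContDiff ℝ ∞ (deriv (deriv c)) := (contDiff_infty_iff_deriv.mp hc').2
  -- orthogonality of c' and c'' on Icc
  have horth : ∀ t ∈ Icc a b, ⟪deriv c t, deriv (deriv c) t⟫ = 0 := by
    intro t ht
    have hg : ∀ s : ℝ, HasDerivAt (fun u => ⟪deriv c u, deriv c u⟫)
        (⟪deriv c s, deriv (deriv c) s⟫ + ⟪deriv (deriv c) s, deriv c s⟫) s := by
      intro s
      have hd : HasDerivAt (deriv c) (deriv (deriv c) s) s :=
        ((hc'.differentiable (by norm_num)) s).hasDerivAt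
      exact hd.inner ℝ hd
    have hud : UniqueDiffWithinAt ℝ (Icc a b) t := (uniqueDiffOn_Icc hab) t ht
    have h0 : derivWithin (fun u => ⟪deriv c u, deriv c u⟫) (Icc a b) t
        = ⟪deriv c t, deriv (deriv c) t⟫ + ⟪deriv (deriv c) t, deriv c t⟫ := by
      rw [(hg t).differentiableAt.derivWithin hud, (hg t).deriv]
    have h1 : derivWithin (fun u => ⟪deriv c u, deriv c u⟫) (Icc a b) t = 0 := by
      have hcongr : ∀ s ∈ Icc a b, ⟪deriv c s, deriv c s⟫ = (1:ℝ) := by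
        intro s hs
        rw [real_inner_self_eq_norm_mul_norm, harc s hs]; norm_num
      rw [derivWithin_congr hcongr (hcongr t ht)]
      simp
    have h2 := h0.symm.trans h1
    rw [real_inner_comm (deriv (deriv c) t) (deriv c t)] at h2
    linarith
  -- smoothness of ξ at points of Icc
  have hξcd : ∀ t₀ ∈ Icc a b, ContDiffAt ℝ ∞ ξ t₀ := by
    intro t₀ ht₀
    have hκ0 : 0 < κ t₀ := hκpos t₀ ht₀
    have hc''ne : deriv (deriv c) t₀ ≠ 0 := by
      intro hcc
      rw [hκ t₀, hcc, norm_zero] at hκ0; exact lt_irrefl 0 hκ0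
    have hncd : ContDiffAt ℝ ∞ n t₀ := by
      have : n = fun t => ‖deriv (deriv c) t‖⁻¹ • deriv (deriv c) t := by
        funext t; rw [hn t, hκ t]
      rw [this]
      exact ((hc''.contDiffAt.norm ℝ hc''ne).inv
        (by simpa using hc''ne)).smul hc''.contDiffAt
    have hecd : ContDiffAt ℝ ∞ e t₀ := by
      have : e = deriv c := funext he
      rw [this]; exact hc'.contDiffAt
    have hbicd : ContDiffAt ℝ ∞ bi t₀ := by
      have : bi = fun t => cross3 (e t) (n t) := funext hbi
      rw [this]; exact contDiffAt_cross3 hecd hncd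
    have : ξ = fun t => cos (β t) • e t +
        sin (β t) • (cos (α t) • n t + sin (α t) • bi t) := funext hξ
    rw [this]
    exact ((hβ.contDiffAt.cos).smul hecd).add
      ((hβ.contDiffAt.sin).smul (((hα.contDiffAt.cos).smul hncd).add
        ((hα.contDiffAt.sin).smul hbicd)))
  -- main argument by contradiction
  by_contra hcon
  push_neg at hcon
  have H : ∀ k : ℕ, ∃ p : ℝ × ℝ, p ∈ Icc a b ×ˢ Ioo (-(1/((k:ℝ)+1))) (1/((k:ℝ)+1)) ∧
      ∃ q : ℝ × ℝ, q ∈ Icc a b ×ˢ Ioo (-(1/((k:ℝ)+1))) (1/((k:ℝ)+1)) ∧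
        F p = F q ∧ p ≠ q := by
    intro k
    have hε : (0:ℝ) < 1/((k:ℝ)+1) := by positivity
    have := hcon (1/((k:ℝ)+1)) hε
    simp only [InjOn] at this
    push_neg at this
    obtain ⟨p, hp, q, hq, hpq, hne⟩ := this
    exact ⟨p, hp, q, hq, hpq, hne⟩
  choose p hp q hq hFeq hne using H
  -- compactness
  have hK : IsCompact ((Icc a b ×ˢ Icc (-1:ℝ) 1) ×ˢ (Icc a b ×ˢ Icc (-1:ℝ) 1)) :=
    ((isCompact_Icc.prod isCompact_Icc).prod (isCompact_Icc.prod isCompact_Icc))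
  have hmem : ∀ k : ℕ, (p k, q k) ∈
      ((Icc a b ×ˢ Icc (-1:ℝ) 1) ×ˢ (Icc a b ×ˢ Icc (-1:ℝ) 1)) := by
    intro k
    have hεle : 1/((k:ℝ)+1) ≤ 1 := by
      rw [div_le_one (by positivity)]; push_cast; linarith [Nat.cast_nonneg (α := ℝ) k]
    have hsub : Ioo (-(1/((k:ℝ)+1))) (1/((k:ℝ)+1)) ⊆ Icc (-1:ℝ) 1 := by
      intro x hx
      constructor
      · linarith [hx.1]
      · linarith [hx.2]
    exact ⟨⟨(hp k).1, hsub (hp k).2⟩, ⟨(hq k).1, hsub (hq k).2⟩⟩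
  obtain ⟨⟨⟨t₁, v₁⟩, ⟨t₂, v₂⟩⟩, hxK, φ, hφ, hT⟩ := hK.tendsto_subseq hmem
  have ht₁ : t₁ ∈ Icc a b := hxK.1.1
  have ht₂ : t₂ ∈ Icc a b := hxK.2.1
  -- component limits
  have hTp : Tendsto (fun k => p (φ k)) atTop (𝓝 (t₁, v₁)) :=
    (continuous_fst.tendsto _).comp hT
  have hTq : Tendsto (fun k => q (φ k)) atTop (𝓝 (t₂, v₂)) :=
    (continuous_snd.tendsto _).comp hT
  -- the second components tend to 0
  have hsmall : ∀ (r : ℕ → ℝ × ℝ), (∀ k : ℕ, r k ∈ Icc a b ×ˢ Ioo (-(1/((k:ℝ)+1))) (1/((k:ℝ)+1))) →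
      Tendsto (fun k => (r (φ k)).2) atTop (𝓝 0) := by
    intro r hr
    apply squeeze_zero_norm (a := fun k : ℕ => 1/((k:ℝ)+1)) ?_ tendsto_one_div_add_atTop_nhds_zero_nat
    · intro k
      have h1 : |(r (φ k)).2| < 1/((φ k : ℝ)+1) := by
        have := (hr (φ k)).2
        rw [abs_lt]; exact ⟨this.1, this.2⟩
      have h2 : 1/((φ k : ℝ)+1) ≤ 1/((k:ℝ)+1) := by
        apply one_div_le_one_div_of_le (by positivity)
        have := hφ.le_apply (x := k)
        push_cast; linarith [(Nat.cast_le (α := ℝ)).mpr this]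
      exact le_of_lt (lt_of_lt_of_le h1 h2)
  have hv₁ : v₁ = 0 := tendsto_nhds_unique ((continuous_snd.tendsto _).comp hTp) (hsmall p hp)
  have hv₂ : v₂ = 0 := tendsto_nhds_unique ((continuous_snd.tendsto _).comp hTq) (hsmall q hq)
  subst hv₁ hv₂
  -- continuity of F at (t,0) for t in Icc
  have hFcont : ∀ t₀ ∈ Icc a b, ContinuousAt F (t₀, (0:ℝ)) := by
    intro t₀ ht₀
    have hξc : ContinuousAt ξ t₀ := (hξcd t₀ ht₀).continuousAt
    exact ((hc.continuous.comp continuous_fst).continuousAt).add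
      (continuousAt_snd.smul (hξc.comp continuousAt_fst))
  -- limits of F along the two sequences agree, so c t₁ = c t₂
  have hteq : t₁ = t₂ := by
    have l1 : Tendsto (fun k => F (p (φ k))) atTop (𝓝 (F (t₁, 0))) :=
      (hFcont t₁ ht₁).tendsto.comp hTp
    have l2 : Tendsto (fun k => F (q (φ k))) atTop (𝓝 (F (t₂, 0))) :=
      (hFcont t₂ ht₂).tendsto.comp hTq
    have l1' : Tendsto (fun k => F (q (φ k))) atTop (𝓝 (F (t₁, 0))) := by
      have : (fun k => F (q (φ k))) = fun k => F (p (φ k)) := by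
        funext k; rw [hFeq (φ k)]
      rw [this]; exact l1
    have hFF : F (t₁, 0) = F (t₂, 0) := tendsto_nhds_unique l1' l2
    have : c t₁ = c t₂ := by
      simpa [hF] using hFF
    exact hinj ht₁ ht₂ this
  subst hteq
  set t₀ := t₁ with ht₀def
  -- key quantities at t₀
  have hκ0 : 0 < κ t₀ := hκpos t₀ ht₁
  have hEnorm : ‖deriv c t₀‖ = 1 := harc t₀ ht₁
  have hNnorm : ‖n t₀‖ = 1 := by
    rw [hn t₀, norm_smul, Real.norm_eq_abs, ← hκ t₀, abs_of_pos (inv_pos.mpr hκ0), inv_mul_cancel₀ (ne_of_gt hκ0)]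
  have hEN : ⟪deriv c t₀, n t₀⟫ = 0 := by
    rw [hn t₀, real_inner_smul_right, horth t₀ ht₁, mul_zero]
  have hBN : ⟪bi t₀, n t₀⟫ = 0 := by
    rw [hbi t₀]; exact cross3_inner_right _ _
  have hNN : ⟪n t₀, n t₀⟫ = 1 := by
    rw [real_inner_self_eq_norm_mul_norm, hNnorm]; norm_num
  have hΞN : ⟪ξ t₀, n t₀⟫ = sin (β t₀) * cos (α t₀) := by
    rw [hξ t₀, he t₀]
    rw [inner_add_left, real_inner_smul_left, real_inner_smul_left, inner_add_left,
      real_inner_smul_left, real_inner_smul_left, hEN, hBN, hNN]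
    ring
  have hsinβ : 0 < sin (β t₀) := sin_pos_of_pos_of_lt_pi (hβ1 t₀ ht₁).1 (hβ1 t₀ ht₁).2
  have hcosα : 0 < cos (α t₀) := by
    apply cos_pos_of_mem_Ioo
    have := (hα1 t₀ ht₁).2
    rw [abs_lt] at this
    exact ⟨by linarith [this.1], this.2⟩
  -- strict derivative of F at (t₀, 0)
  set L : ℝ × ℝ →L[ℝ] E3 :=
    ((ContinuousLinearMap.fst ℝ ℝ ℝ).smulRight (deriv c t₀)) +
      ((ContinuousLinearMap.snd ℝ ℝ ℝ).smulRight (ξ t₀)) with hLdef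
  have hLapp : ∀ z : ℝ × ℝ, L z = z.1 • deriv c t₀ + z.2 • ξ t₀ := by
    intro z
    simp [hLdef]
  have hstrict : HasStrictFDerivAt F L (t₀, (0:ℝ)) := by
    have hcC : HasStrictDerivAt c (deriv c t₀) t₀ :=
      hc.contDiffAt.hasStrictDerivAt (by norm_num)
    have p1 : HasStrictFDerivAt (fun pr : ℝ × ℝ => c pr.1)
        (((1 : ℝ →L[ℝ] ℝ).smulRight (deriv c t₀)).comp (ContinuousLinearMap.fst ℝ ℝ ℝ))
        (t₀, (0:ℝ)) :=
      (hcC.hasStrictFDerivAt).comp (t₀, (0:ℝ))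
        (ContinuousLinearMap.hasStrictFDerivAt (f := ContinuousLinearMap.fst ℝ ℝ ℝ) (x := (t₀, (0:ℝ))))
    have hξs : HasStrictFDerivAt ξ (fderiv ℝ ξ t₀) t₀ :=
      (hξcd t₀ ht₁).hasStrictFDerivAt (by norm_num)
    have pξ : HasStrictFDerivAt (fun pr : ℝ × ℝ => ξ pr.1)
        ((fderiv ℝ ξ t₀).comp (ContinuousLinearMap.fst ℝ ℝ ℝ)) (t₀, (0:ℝ)) :=
      hξs.comp (t₀, (0:ℝ))
        (ContinuousLinearMap.hasStrictFDerivAt (f := ContinuousLinearMap.fst ℝ ℝ ℝ) (x := (t₀, (0:ℝ))))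
    have psnd : HasStrictFDerivAt (fun pr : ℝ × ℝ => pr.2)
        (ContinuousLinearMap.snd ℝ ℝ ℝ) (t₀, (0:ℝ)) :=
      ContinuousLinearMap.hasStrictFDerivAt (f := ContinuousLinearMap.snd ℝ ℝ ℝ) (x := (t₀, (0:ℝ)))
    have p2 : HasStrictFDerivAt (fun pr : ℝ × ℝ => pr.2 • ξ pr.1)
        (((t₀, (0:ℝ)).2 : ℝ) • ((fderiv ℝ ξ t₀).comp (ContinuousLinearMap.fst ℝ ℝ ℝ)) +
          (ContinuousLinearMap.snd ℝ ℝ ℝ).smulRight (ξ (t₀, (0:ℝ)).1)) (t₀, (0:ℝ)) :=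
      psnd.smul pξ
    have hsum := p1.add p2
    have : L = (((1 : ℝ →L[ℝ] ℝ).smulRight (deriv c t₀)).comp (ContinuousLinearMap.fst ℝ ℝ ℝ)) +
        (((t₀, (0:ℝ)).2 : ℝ) • ((fderiv ℝ ξ t₀).comp (ContinuousLinearMap.fst ℝ ℝ ℝ)) +
          (ContinuousLinearMap.snd ℝ ℝ ℝ).smulRight (ξ (t₀, (0:ℝ)).1)) := by
      ext z <;> simp [hLdef]
    rw [hF, this]
    exact hsum
  -- L is injective
  have hLinj : Function.Injective L := by
    have key : ∀ z : ℝ × ℝ, L z = 0 → z = 0 := by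
      rintro ⟨h, u⟩ hz
      rw [hLapp] at hz
      have hinner : ⟪h • deriv c t₀ + u • ξ t₀, n t₀⟫ = 0 := by rw [hz, inner_zero_left]
      rw [inner_add_left, real_inner_smul_left, real_inner_smul_left, hEN, hΞN] at hinner
      have hu : u = 0 := by
        have hne' : sin (β t₀) * cos (α t₀) ≠ 0 := by positivity
        have : u * (sin (β t₀) * cos (α t₀)) = 0 := by linarith
        exact (mul_eq_zero.mp this).resolve_right hne'
      subst hu
      simp only [zero_smul, add_zero] at hz
      have hh : h = 0 := by
        by_contra hh0
        have : deriv c t₀ = 0 := by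
          have := smul_eq_zero.mp hz
          rcases this with h1 | h2
          · exact absurd h1 hh0
          · exact h2
        rw [this, norm_zero] at hEnorm; norm_num at hEnorm
      subst hh; rfl
    intro z w hzw
    have : L (z - w) = 0 := by rw [map_sub, hzw, sub_self]
    have := key _ this
    exact sub_eq_zero.mp this
  -- local injectivity and contradiction
  obtain ⟨U, hU, hinjU⟩ := locInj hstrict hLinj
  have hev1 : ∀ᶠ k in atTop, p (φ k) ∈ U := hTp hU
  have hev2 : ∀ᶠ k in atTop, q (φ k) ∈ U := hTq hU
  obtain ⟨k, hk1, hk2⟩ := (hev1.and hev2).exists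
  exact hne (φ k) (hinjU hk1 hk2 (hFeq (φ k)))
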